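/- Let V be a ℚ-vector space. Let s : P³V ⊗ P²V → P⁵V be the linear map induced by multiplication in the symmetric algebra, s(u ⊗ v) = uv. Then s is surjective and the image of m : V ⊗ Λ²(P²V) → P³V ⊗ P²V equals the kernel of s; in other words, the sequence 0 → R(V) → V ⊗ Λ²(P²V) →(m) P³V ⊗ P²V →(s) P⁵V → 0 is exact. -/

import Mathlib

/-!
Common constructions: for a `ℚ`-vector space `V`, the symmetric powers
`P²V, P³V, P⁴V, P⁵V` (as `SqM V`, `CubM V`, `QuarM V`, `QuinM V`), built as iterated
quotients of tensor products, with the multiplication maps between them; the exterior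
square `Λ²W` (as `AltM W`) with the wedge map; and the 5-linear map `⋆` (as `star5`).
-/

open TensorProduct

noncomputable section

variable (V W : Type) [AddCommGroup V] [Module ℚ V] [AddCommGroup W] [Module ℚ W]

/-- The relations defining the symmetric square `P²V` as a quotient of `V ⊗ V`. -/
def sqRel : Submodule ℚ (V ⊗[ℚ] V) :=
  Submodule.span ℚ {z | ∃ x y : V, z = x ⊗ₜ[ℚ] y - y ⊗ₜ[ℚ] x}

/-- The symmetric square `P²V`. -/
abbrev SqM : Type := (V ⊗[ℚ] V) ⧸ sqRel V

/-- The product `V × V → P²V`, `(x, y) ↦ xy`. -/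
def sqm : V →ₗ[ℚ] V →ₗ[ℚ] SqM V :=
  (TensorProduct.mk ℚ V V).compr₂ (sqRel V).mkQ

/-- The relations presenting the symmetric cube `P³V` as a quotient of `V ⊗ P²V`. -/
def cubRel : Submodule ℚ (V ⊗[ℚ] SqM V) :=
  Submodule.span ℚ {z | ∃ x y w : V, z = x ⊗ₜ[ℚ] sqm V y w - y ⊗ₜ[ℚ] sqm V x w}

/-- The symmetric cube `P³V`. -/
abbrev CubM : Type := (V ⊗[ℚ] SqM V) ⧸ cubRel V

/-- The product `V × P²V → P³V`. -/
def mulC : V →ₗ[ℚ] SqM V →ₗ[ℚ] CubM V :=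
  (TensorProduct.mk ℚ V (SqM V)).compr₂ (cubRel V).mkQ

/-- The relations presenting `P⁴V` as a quotient of `V ⊗ P³V`. -/
def quarRel : Submodule ℚ (V ⊗[ℚ] CubM V) :=
  Submodule.span ℚ {z | ∃ (x y : V) (u : SqM V), z = x ⊗ₜ[ℚ] mulC V y u - y ⊗ₜ[ℚ] mulC V x u}

/-- The symmetric fourth power `P⁴V`. -/
abbrev QuarM : Type := (V ⊗[ℚ] CubM V) ⧸ quarRel V

/-- The product `V × P³V → P⁴V`. -/
def mulQ : V →ₗ[ℚ] CubM V →ₗ[ℚ] QuarM V :=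
  (TensorProduct.mk ℚ V (CubM V)).compr₂ (quarRel V).mkQ

/-- The relations presenting `P⁵V` as a quotient of `V ⊗ P⁴V`. -/
def quinRel : Submodule ℚ (V ⊗[ℚ] QuarM V) :=
  Submodule.span ℚ {z | ∃ (x y : V) (c : CubM V), z = x ⊗ₜ[ℚ] mulQ V y c - y ⊗ₜ[ℚ] mulQ V x c}

/-- The symmetric fifth power `P⁵V`. -/
abbrev QuinM : Type := (V ⊗[ℚ] QuarM V) ⧸ quinRel V

/-- The product `V × P⁴V → P⁵V`. -/
def mulQn : V →ₗ[ℚ] QuarM V →ₗ[ℚ] QuinM V :=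
  (TensorProduct.mk ℚ V (QuarM V)).compr₂ (quinRel V).mkQ

/-- The relations defining the exterior square `Λ²W` as a quotient of `W ⊗ W`. -/
def altRel2 : Submodule ℚ (W ⊗[ℚ] W) :=
  Submodule.span ℚ {z | ∃ x : W, z = x ⊗ₜ[ℚ] x}

/-- The exterior square `Λ²W`. -/
abbrev AltM : Type := (W ⊗[ℚ] W) ⧸ altRel2 W

/-- The wedge product `W × W → Λ²W`. -/
def wdg : W →ₗ[ℚ] W →ₗ[ℚ] AltM W :=
  (TensorProduct.mk ℚ W W).compr₂ (altRel2 W).mkQ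

/-- The element `⋆(x₁,…,x₅) = Σ_{i ∈ ℤ/5} xᵢ ⊗ (x_{i+1}x_{i+2} ∧ x_{i+3}x_{i+4})`
of `V ⊗ Λ²(P²V)`. -/
def star5 (x₁ x₂ x₃ x₄ x₅ : V) : V ⊗[ℚ] AltM (SqM V) :=
    x₁ ⊗ₜ[ℚ] wdg (SqM V) (sqm V x₂ x₃) (sqm V x₄ x₅)
  + x₂ ⊗ₜ[ℚ] wdg (SqM V) (sqm V x₃ x₄) (sqm V x₅ x₁)
  + x₃ ⊗ₜ[ℚ] wdg (SqM V) (sqm V x₄ x₅) (sqm V x₁ x₂)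
  + x₄ ⊗ₜ[ℚ] wdg (SqM V) (sqm V x₅ x₁) (sqm V x₂ x₃)
  + x₅ ⊗ₜ[ℚ] wdg (SqM V) (sqm V x₁ x₂) (sqm V x₃ x₄)


/-! ### Auxiliary material for the proof -/

section Aux

/-- Basic commutativity in `P²V`. -/
lemma sqm_comm (x y : V) : sqm V x y = sqm V y x := by
  show (sqRel V).mkQ (x ⊗ₜ[ℚ] y) = (sqRel V).mkQ (y ⊗ₜ[ℚ] x)
  rw [Submodule.mkQ_apply, Submodule.mkQ_apply, Submodule.Quotient.eq]
  exact Submodule.subset_span ⟨x, y, rfl⟩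

lemma mulC_swap (x y w : V) : mulC V x (sqm V y w) = mulC V y (sqm V x w) := by
  show (cubRel V).mkQ _ = (cubRel V).mkQ _
  rw [Submodule.mkQ_apply, Submodule.mkQ_apply, Submodule.Quotient.eq]
  exact Submodule.subset_span ⟨x, y, w, rfl⟩

lemma mulQ_swap (x y : V) (u : SqM V) :
    mulQ V x (mulC V y u) = mulQ V y (mulC V x u) := by
  show (quarRel V).mkQ _ = (quarRel V).mkQ _
  rw [Submodule.mkQ_apply, Submodule.mkQ_apply, Submodule.Quotient.eq]
  exact Submodule.subset_span ⟨x, y, u, rfl⟩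

lemma mulQn_swap (x y : V) (c : CubM V) :
    mulQn V x (mulQ V y c) = mulQn V y (mulQ V x c) := by
  show (quinRel V).mkQ _ = (quinRel V).mkQ _
  rw [Submodule.mkQ_apply, Submodule.mkQ_apply, Submodule.Quotient.eq]
  exact Submodule.subset_span ⟨x, y, c, rfl⟩

/-- The submodule of `P³V ⊗ P²V` spanned by the images of the generators of `m`. -/
def NRel : Submodule ℚ (CubM V ⊗[ℚ] SqM V) :=
  Submodule.span ℚ
    {z | ∃ (q : V) (u v : SqM V), z = mulC V q u ⊗ₜ[ℚ] v - mulC V q v ⊗ₜ[ℚ] u}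

/-- The quotient `(P³V ⊗ P²V) / N`. -/
abbrev QQ : Type := (CubM V ⊗[ℚ] SqM V) ⧸ NRel V

/-- The bilinear map `P³V × P²V → QQ`. -/
def hh : CubM V →ₗ[ℚ] SqM V →ₗ[ℚ] QQ V :=
  (TensorProduct.mk ℚ (CubM V) (SqM V)).compr₂ (NRel V).mkQ

@[simp] lemma hh_apply (c : CubM V) (v : SqM V) :
    hh V c v = (NRel V).mkQ (c ⊗ₜ[ℚ] v) := rfl

lemma hh_swap (q : V) (u v : SqM V) :
    hh V (mulC V q u) v = hh V (mulC V q v) u := by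
  show (NRel V).mkQ _ = (NRel V).mkQ _
  rw [Submodule.mkQ_apply, Submodule.mkQ_apply, Submodule.Quotient.eq]
  exact Submodule.subset_span ⟨q, u, v, rfl⟩

lemma mulC_rot (q x y : V) : mulC V q (sqm V x y) = mulC V y (sqm V q x) := by
  rw [sqm_comm, mulC_swap]

/-- The basic "Petersen move" identity in the quotient `QQ`. -/
lemma P_move (q x y a b : V) :
    hh V (mulC V q (sqm V x y)) (sqm V a b)
      = hh V (mulC V q (sqm V x a)) (sqm V y b) := by
  calc hh V (mulC V q (sqm V x y)) (sqm V a b)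
      = hh V (mulC V y (sqm V q x)) (sqm V a b) := by rw [mulC_rot]
    _ = hh V (mulC V y (sqm V a b)) (sqm V q x) := hh_swap V y _ _
    _ = hh V (mulC V a (sqm V y b)) (sqm V q x) := by rw [mulC_swap]
    _ = hh V (mulC V a (sqm V q x)) (sqm V y b) := hh_swap V a _ _
    _ = hh V (mulC V q (sqm V x a)) (sqm V y b) := by
        rw [mulC_swap V a q, sqm_comm V a x]

/-- Induction principle for `P²V`. -/
lemma sq_ind {C : SqM V → Prop} (zero : C 0)
    (base : ∀ x y : V, C (sqm V x y))
    (add : ∀ u v, C u → C v → C (u + v)) : ∀ u, C u := by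
  intro u
  obtain ⟨z, rfl⟩ := Submodule.Quotient.mk_surjective (sqRel V) u
  induction z using TensorProduct.induction_on with
  | zero => simpa using zero
  | tmul x y => exact base x y
  | add a b ha hb => simpa [Submodule.Quotient.mk_add] using add _ _ ha hb

/-- Induction principle for `P³V`. -/
lemma cub_ind {C : CubM V → Prop} (zero : C 0)
    (base : ∀ (y : V) (u : SqM V), C (mulC V y u))
    (add : ∀ c d, C c → C d → C (c + d)) : ∀ c, C c := by
  intro c
  obtain ⟨z, rfl⟩ := Submodule.Quotient.mk_surjective (cubRel V) c
  induction z using TensorProduct.induction_on with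
  | zero => simpa using zero
  | tmul y u => exact base y u
  | add a b ha hb => simpa [Submodule.Quotient.mk_add] using add _ _ ha hb

/-- Induction principle for `P⁴V`. -/
lemma quar_ind {C : QuarM V → Prop} (zero : C 0)
    (base : ∀ (x : V) (c : CubM V), C (mulQ V x c))
    (add : ∀ c d, C c → C d → C (c + d)) : ∀ d, C d := by
  intro d
  obtain ⟨z, rfl⟩ := Submodule.Quotient.mk_surjective (quarRel V) d
  induction z using TensorProduct.induction_on with
  | zero => simpa using zero
  | tmul x c => exact base x c
  | add a b ha hb => simpa [Submodule.Quotient.mk_add] using add _ _ ha hb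

/-- Induction principle for `P⁵V`. -/
lemma quin_ind {C : QuinM V → Prop} (zero : C 0)
    (base : ∀ (q : V) (d : QuarM V), C (mulQn V q d))
    (add : ∀ c d, C c → C d → C (c + d)) : ∀ t, C t := by
  intro t
  obtain ⟨z, rfl⟩ := Submodule.Quotient.mk_surjective (quinRel V) t
  induction z using TensorProduct.induction_on with
  | zero => simpa using zero
  | tmul q d => exact base q d
  | add a b ha hb => simpa [Submodule.Quotient.mk_add] using add _ _ ha hb

/-- Induction principle for `Λ²W`. -/
lemma alt_ind {C : AltM W → Prop} (zero : C 0)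
    (base : ∀ u v : W, C (wdg W u v))
    (add : ∀ c d, C c → C d → C (c + d)) : ∀ a, C a := by
  intro a
  obtain ⟨z, rfl⟩ := Submodule.Quotient.mk_surjective (altRel2 W) a
  induction z using TensorProduct.induction_on with
  | zero => simpa using zero
  | tmul u v => exact base u v
  | add a b ha hb => simpa [Submodule.Quotient.mk_add] using add _ _ ha hb

/-- Extensionality for linear maps out of `P³V`. -/
lemma cub_ext {M : Type} [AddCommGroup M] [Module ℚ M] {f g : CubM V →ₗ[ℚ] M}
    (hfg : ∀ (y : V) (u : SqM V), f (mulC V y u) = g (mulC V y u)) : f = g :=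
  Submodule.linearMap_qext _ (TensorProduct.ext' fun y u => hfg y u)

/-- Extensionality for linear maps out of `P⁴V`. -/
lemma quar_ext {M : Type} [AddCommGroup M] [Module ℚ M] {f g : QuarM V →ₗ[ℚ] M}
    (hfg : ∀ (x : V) (c : CubM V), f (mulQ V x c) = g (mulQ V x c)) : f = g :=
  Submodule.linearMap_qext _ (TensorProduct.ext' fun x c => hfg x c)

/-- The 4-linear map `(q, x, y, u) ↦ [q(xy) ⊗ u]` into `QQ`. -/
def K : V →ₗ[ℚ] V →ₗ[ℚ] V →ₗ[ℚ] SqM V →ₗ[ℚ] QQ V where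
  toFun q := (sqm V).compr₂ ((hh V).comp (mulC V q))
  map_add' a b := by
    ext x y u
    simp [map_add]
  map_smul' r a := by
    ext x y u
    simp [map_smul]

@[simp] lemma K_apply (q x y : V) (u : SqM V) :
    K V q x y u = hh V (mulC V q (sqm V x y)) u := rfl

/-- Descend `K q x` to `P³V`. -/
def C2f (q x : V) : CubM V →ₗ[ℚ] QQ V :=
  Submodule.liftQ (cubRel V) (TensorProduct.lift (K V q x)) (by
    apply Submodule.span_le.mpr
    rintro z ⟨a, b, c, rfl⟩
    simp only [SetLike.mem_coe, LinearMap.mem_ker, map_sub, TensorProduct.lift.tmul,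
      K_apply]
    rw [P_move, sub_self])

@[simp] lemma C2f_mulC (q x y : V) (u : SqM V) :
    C2f V q x (mulC V y u) = hh V (mulC V q (sqm V x y)) u := by
  show Submodule.liftQ _ _ _ ((cubRel V).mkQ (y ⊗ₜ[ℚ] u)) = _
  exact TensorProduct.lift.tmul (f' := K V q x) y u

lemma C2f_swap (x y : V) : C2f V x y = C2f V y x :=
  cub_ext V fun w u => by rw [C2f_mulC, C2f_mulC, mulC_swap]

lemma C2f_add_left (a b x : V) : C2f V (a + b) x = C2f V a x + C2f V b x :=
  cub_ext V fun y u => by simp [map_add]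

lemma C2f_smul_left (r : ℚ) (a x : V) : C2f V (r • a) x = r • C2f V a x :=
  cub_ext V fun y u => by simp [map_smul]

/-- Package `C2f q` as a bilinear map. -/
def C2p (q : V) : V →ₗ[ℚ] CubM V →ₗ[ℚ] QQ V where
  toFun x := C2f V q x
  map_add' a b := cub_ext V fun y u => by
    simp [map_add]
  map_smul' r a := cub_ext V fun y u => by
    simp [map_smul]

@[simp] lemma C2p_apply (q x : V) (c : CubM V) : C2p V q x c = C2f V q x c := rfl

/-- Descend to `P⁴V`. -/
def B2f (q : V) : QuarM V →ₗ[ℚ] QQ V :=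
  Submodule.liftQ (quarRel V) (TensorProduct.lift (C2p V q)) (by
    apply Submodule.span_le.mpr
    rintro z ⟨x, y, u, rfl⟩
    simp only [SetLike.mem_coe, LinearMap.mem_ker, map_sub, TensorProduct.lift.tmul,
      C2p_apply, C2f_mulC]
    rw [sqm_comm, sub_self])

@[simp] lemma B2f_mulQ (q x : V) (c : CubM V) :
    B2f V q (mulQ V x c) = C2f V q x c := by
  show Submodule.liftQ _ _ _ ((quarRel V).mkQ (x ⊗ₜ[ℚ] c)) = _
  exact TensorProduct.lift.tmul (f' := C2p V q) x c

/-- Package `B2f` as a bilinear map. -/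
def Phi : V →ₗ[ℚ] QuarM V →ₗ[ℚ] QQ V where
  toFun q := B2f V q
  map_add' a b := quar_ext V fun x c => by
    simp only [B2f_mulQ, LinearMap.add_apply, C2f_add_left]
  map_smul' r a := quar_ext V fun x c => by
    simp only [B2f_mulQ, LinearMap.smul_apply, RingHom.id_apply, C2f_smul_left]

@[simp] lemma Phi_apply (q : V) (d : QuarM V) : Phi V q d = B2f V q d := rfl

lemma C2f_swap' (x y : V) (c : CubM V) : C2f V x y c = C2f V y x c := by
  rw [C2f_swap]

/-- Descend to `P⁵V`: the map `φ : P⁵V → QQ`. -/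
def phi : QuinM V →ₗ[ℚ] QQ V :=
  Submodule.liftQ (quinRel V) (TensorProduct.lift (Phi V)) (by
    apply Submodule.span_le.mpr
    rintro z ⟨x, y, c, rfl⟩
    simp only [SetLike.mem_coe, LinearMap.mem_ker, map_sub, TensorProduct.lift.tmul,
      Phi_apply, B2f_mulQ]
    rw [C2f_swap' V x y, sub_self])

@[simp] lemma phi_mulQn (q : V) (d : QuarM V) :
    phi V (mulQn V q d) = B2f V q d := by
  show Submodule.liftQ _ _ _ ((quinRel V).mkQ (q ⊗ₜ[ℚ] d)) = _
  exact TensorProduct.lift.tmul (f' := Phi V) q d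

/-- Full symmetry of the quintuple product, in the form needed below. -/
lemma quin_sym (q x y z w : V) :
    mulQn V q (mulQ V x (mulC V y (sqm V z w)))
      = mulQn V q (mulQ V z (mulC V w (sqm V x y))) := by
  rw [mulC_swap V y z w, mulQ_swap V x z, sqm_comm V y w, mulC_swap V x w y]

end Aux

/-- **Key step in Lemma 2.1.** The sequence
`0 → R(V) → V ⊗ Λ²(P²V) →(m) P³V ⊗ P²V →(s) P⁵V → 0` is exact, where `s` is induced by
multiplication in the symmetric algebra: `s` is surjective and `range m = ker s`. -/
theorem exact_m_s
    (m : (V ⊗[ℚ] AltM (SqM V)) →ₗ[ℚ] (CubM V ⊗[ℚ] SqM V))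
    (hm : ∀ (q : V) (u v : SqM V),
      m (q ⊗ₜ[ℚ] wdg (SqM V) u v) = mulC V q u ⊗ₜ[ℚ] v - mulC V q v ⊗ₜ[ℚ] u)
    (s : (CubM V ⊗[ℚ] SqM V) →ₗ[ℚ] QuinM V)
    (hs : ∀ q x y z w : V,
      s (mulC V q (sqm V x y) ⊗ₜ[ℚ] sqm V z w)
        = mulQn V q (mulQ V x (mulC V y (sqm V z w)))) :
    Function.Surjective s ∧ LinearMap.range m = LinearMap.ker s := by
  -- Surjectivity of s
  have hsurj : Function.Surjective s := by
    intro t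
    have : t ∈ LinearMap.range s := by
      refine quin_ind V (C := fun t => t ∈ LinearMap.range s) (zero_mem _) ?_
        (fun a b ha hb => add_mem ha hb) t
      intro q d
      refine quar_ind V (C := fun d => mulQn V q d ∈ LinearMap.range s) ?_ ?_ ?_ d
      · simp
      · intro x c
        refine cub_ind V
          (C := fun c => mulQn V q (mulQ V x c) ∈ LinearMap.range s) ?_ ?_ ?_ c
        · simp
        · intro y u
          refine sq_ind V
            (C := fun u => mulQn V q (mulQ V x (mulC V y u)) ∈ LinearMap.range s)
            ?_ ?_ ?_ u
          · simp
          · intro z w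
            exact ⟨_, hs q x y z w⟩
          · intro u v hu hv
            simpa [map_add] using add_mem hu hv
        · intro c d hc hd
          simpa [map_add] using add_mem hc hd
      · intro c d hc hd
        simpa [map_add] using add_mem hc hd
    exact this
  -- symmetry of s on generators
  have k1 : ∀ (q x y : V) (v : SqM V),
      s (mulC V q (sqm V x y) ⊗ₜ[ℚ] v) = s (mulC V q v ⊗ₜ[ℚ] sqm V x y) := by
    intro q x y v
    refine sq_ind V
      (C := fun v => s (mulC V q (sqm V x y) ⊗ₜ[ℚ] v) = s (mulC V q v ⊗ₜ[ℚ] sqm V x y))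
      ?_ ?_ ?_ v
    · simp
    · intro z w
      rw [hs, hs, quin_sym]
    · intro u v hu hv
      simp only [TensorProduct.tmul_add, map_add, TensorProduct.add_tmul, hu, hv]
  have Ssym : ∀ (q : V) (u v : SqM V),
      s (mulC V q u ⊗ₜ[ℚ] v) = s (mulC V q v ⊗ₜ[ℚ] u) := by
    intro q u v
    refine sq_ind V
      (C := fun u => ∀ v : SqM V, s (mulC V q u ⊗ₜ[ℚ] v) = s (mulC V q v ⊗ₜ[ℚ] u))
      ?_ ?_ ?_ u v
    · intro v; simp
    · intro x y v; exact k1 q x y v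
    · intro u₁ u₂ h₁ h₂ v
      simp only [map_add, TensorProduct.add_tmul, TensorProduct.tmul_add, h₁, h₂]
  -- range m = NRel
  have hrange : LinearMap.range m = NRel V := by
    apply le_antisymm
    · rintro _ ⟨t, rfl⟩
      induction t using TensorProduct.induction_on with
      | zero => simp
      | add a b ha hb => rw [map_add]; exact add_mem ha hb
      | tmul q a =>
        refine alt_ind (SqM V) (C := fun a => m (q ⊗ₜ[ℚ] a) ∈ NRel V) ?_ ?_ ?_ a
        · simp
        · intro u v
          rw [hm]
          exact Submodule.subset_span ⟨q, u, v, rfl⟩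
        · intro a b ha hb
          rw [TensorProduct.tmul_add, map_add]
          exact add_mem ha hb
    · apply Submodule.span_le.mpr
      rintro z ⟨q, u, v, rfl⟩
      exact ⟨q ⊗ₜ[ℚ] wdg (SqM V) u v, hm q u v⟩
  -- the section property: phi ∘ s = mkQ
  have h1 : ∀ (y a b : V) (v : SqM V),
      phi V (s (mulC V y (sqm V a b) ⊗ₜ[ℚ] v))
        = (NRel V).mkQ (mulC V y (sqm V a b) ⊗ₜ[ℚ] v) := by
    intro y a b v
    refine sq_ind V (C := fun v => phi V (s (mulC V y (sqm V a b) ⊗ₜ[ℚ] v))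
      = (NRel V).mkQ (mulC V y (sqm V a b) ⊗ₜ[ℚ] v)) ?_ ?_ ?_ v
    · simp
    · intro z w
      rw [hs, phi_mulQn, B2f_mulQ, C2f_mulC, hh_apply]
    · intro u v hu hv
      simp only [TensorProduct.tmul_add, map_add, hu, hv]
  have h2 : ∀ (y : V) (u v : SqM V),
      phi V (s (mulC V y u ⊗ₜ[ℚ] v)) = (NRel V).mkQ (mulC V y u ⊗ₜ[ℚ] v) := by
    intro y u v
    refine sq_ind V (C := fun u => ∀ v : SqM V,
      phi V (s (mulC V y u ⊗ₜ[ℚ] v)) = (NRel V).mkQ (mulC V y u ⊗ₜ[ℚ] v)) ?_ ?_ ?_ u v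
    · intro v; simp
    · intro a b v; exact h1 y a b v
    · intro u₁ u₂ hu₁ hu₂ v
      simp only [map_add, TensorProduct.add_tmul, hu₁, hu₂]
  have hcv : ∀ (c : CubM V) (v : SqM V),
      phi V (s (c ⊗ₜ[ℚ] v)) = (NRel V).mkQ (c ⊗ₜ[ℚ] v) := by
    intro c v
    refine cub_ind V (C := fun c => ∀ v : SqM V,
      phi V (s (c ⊗ₜ[ℚ] v)) = (NRel V).mkQ (c ⊗ₜ[ℚ] v)) ?_ ?_ ?_ c v
    · intro v; simp
    · intro y u v; exact h2 y u v
    · intro c d hc hd v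
      simp only [TensorProduct.add_tmul, map_add, hc, hd]
  have hL : ∀ t : CubM V ⊗[ℚ] SqM V, phi V (s t) = (NRel V).mkQ t := by
    intro t
    induction t using TensorProduct.induction_on with
    | zero => simp
    | tmul c v => exact hcv c v
    | add a b ha hb => simp only [map_add, ha, hb]
  refine ⟨hsurj, le_antisymm ?_ ?_⟩
  · -- range m ≤ ker s
    rintro _ ⟨t, rfl⟩
    rw [LinearMap.mem_ker]
    induction t using TensorProduct.induction_on with
    | zero => simp
    | add a b ha hb => rw [map_add, map_add, ha, hb, add_zero]
    | tmul q a =>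
      refine alt_ind (SqM V) (C := fun a => s (m (q ⊗ₜ[ℚ] a)) = 0) ?_ ?_ ?_ a
      · simp
      · intro u v
        rw [hm, map_sub, Ssym, sub_self]
      · intro a b ha hb
        rw [TensorProduct.tmul_add, map_add, map_add, ha, hb, add_zero]
  · -- ker s ≤ range m
    intro t ht
    rw [LinearMap.mem_ker] at ht
    rw [hrange]
    have := hL t
    rw [ht, map_zero] at this
    exact (Submodule.Quotient.mk_eq_zero _).1 this.symm

end
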